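/- Let F be a family of subspaces of 𝔽_q^n with diam(F) = d (in the metric Δ), and define m_F := min{x ∈ ℕ : supp(F) ⊆ [x, x+d] or supp(F^⊥) ⊆ [x, x+d]}, where F^⊥ = {W^⊥ : W ∈ F}. Then m_F ≤ (n - d)/2. -/

import Mathlib

open Module

/-- Orthogonal complement with respect to the standard bilinear form. -/
def stdPerp {K : Type*} [Field K] {n : ℕ} (U : Submodule K (Fin n → K)) :
    Submodule K (Fin n → K) where
  carrier := {v | ∀ u ∈ U, ∑ i, v i * u i = 0}
  zero_mem' := by intro u hu; simp
  add_mem' := by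
    intro a b ha hb u hu
    simpa [add_mul, Finset.sum_add_distrib] using by
      rw [ha u hu, hb u hu]; ring
  smul_mem' := by
    intro c a ha u hu
    simp only [Pi.smul_apply, smul_eq_mul, mul_assoc, ← Finset.mul_sum]
    rw [ha u hu, mul_zero]


noncomputable def dotForm (K : Type*) [Field K] (n : ℕ) : LinearMap.BilinForm K (Fin n → K) :=
  LinearMap.mk₂ K (fun x y => ∑ i, x i * y i)
    (by intro x x' y; simp [add_mul, Finset.sum_add_distrib])
    (by intro c x y; simp [Finset.mul_sum, mul_assoc])
    (by intro x y y'; simp [mul_add, Finset.sum_add_distrib])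
    (by intro c x y; simp [Finset.mul_sum]; ring_nf; simp [mul_comm, mul_left_comm])

lemma dotForm_apply {K : Type*} [Field K] {n : ℕ} (x y : Fin n → K) :
    dotForm K n x y = ∑ i, x i * y i := rfl

lemma dotForm_symm {K : Type*} [Field K] {n : ℕ} : (dotForm K n).IsSymm := by
  rw [LinearMap.BilinForm.isSymm_def]
  intro x y; simp [dotForm_apply, mul_comm]

lemma dotForm_nondeg {K : Type*} [Field K] {n : ℕ} : (dotForm K n).Nondegenerate := by
  refine ⟨?_, ?_⟩ <;> intro x hx <;>
  funext i <;>
  have := hx (Pi.single i 1) <;>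
  simpa [dotForm_apply, Pi.single_apply, Finset.sum_ite_eq'] using this

lemma stdPerp_eq {K : Type*} [Field K] {n : ℕ} (U : Submodule K (Fin n → K)) :
    stdPerp U = (dotForm K n).orthogonal U := by
  ext v
  constructor
  · intro hv u hu
    have := hv u hu
    simpa [LinearMap.BilinForm.IsOrtho, dotForm_apply, mul_comm] using this
  · intro hv u hu
    have := hv u hu
    simpa [LinearMap.BilinForm.IsOrtho, dotForm_apply, mul_comm] using this

lemma finrank_stdPerp {K : Type*} [Field K] {n : ℕ} (U : Submodule K (Fin n → K)) :
    finrank K (stdPerp U) = n - finrank K U := by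
  rw [stdPerp_eq]
  rw [LinearMap.BilinForm.finrank_orthogonal dotForm_nondeg]
  simp [Module.finrank_fintype_fun_eq_card]

/-- If `diam(𝓕) = d` then
`m_𝓕 := min {x : supp(𝓕) ⊆ [x, x+d] or supp(𝓕^⊥) ⊆ [x, x+d]}` is at most `(n-d)/2`. -/
theorem min_support_le {K : Type*} [Field K] [Fintype K]
    (q n d : ℕ) (hq : Fintype.card K = q) (hpp : IsPrimePow q)
    (𝓕 : Set (Submodule K (Fin n → K)))
    (hdiam : ∀ A ∈ 𝓕, ∀ B ∈ 𝓕,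
      finrank K ↥A + finrank K ↥B - 2 * finrank K ↥(A ⊓ B) ≤ d)
    (hdiam' : ∃ A ∈ 𝓕, ∃ B ∈ 𝓕,
      finrank K ↥A + finrank K ↥B - 2 * finrank K ↥(A ⊓ B) = d) :
    2 * sInf {x : ℕ |
        (∀ A ∈ 𝓕, finrank K ↥A ∈ Set.Icc x (x + d)) ∨
        (∀ A ∈ 𝓕, finrank K ↥(stdPerp A) ∈ Set.Icc x (x + d))} + d ≤ n := by
  obtain ⟨A₀, hA₀, B₀, hB₀, hd⟩ := hdiam'
  have hsub : ∀ A B : Submodule K (Fin n → K),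
      finrank K ↥A + finrank K ↥B - 2 * finrank K ↥(A ⊓ B) ≤ n := by
    intro A B
    have h1 := Submodule.finrank_sup_add_finrank_inf_eq A B
    have h2 : finrank K ↥(A ⊔ B) ≤ n := by
      have := Submodule.finrank_le (A ⊔ B)
      simpa [Module.finrank_fintype_fun_eq_card] using this
    omega
  have hdn : d ≤ n := hd ▸ hsub A₀ B₀
  have hTne : Set.Nonempty {k : ℕ | ∃ A ∈ 𝓕, finrank K ↥A = k} := ⟨_, A₀, hA₀, rfl⟩
  set m := sInf {k : ℕ | ∃ A ∈ 𝓕, finrank K ↥A = k} with hm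
  obtain ⟨B, hB, hBm⟩ : ∃ A ∈ 𝓕, finrank K ↥A = m := Nat.sInf_mem hTne
  have hmle : ∀ A ∈ 𝓕, m ≤ finrank K ↥A := fun A hA => Nat.sInf_le ⟨A, hA, rfl⟩
  have hub : ∀ A ∈ 𝓕, finrank K ↥A ≤ m + d := by
    intro A hA
    have h := hdiam A hA B hB
    have hinf : finrank K ↥(A ⊓ B) ≤ finrank K ↥B :=
      Submodule.finrank_mono inf_le_right
    omega
  have hAn : ∀ A ∈ 𝓕, finrank K ↥A ≤ n := by
    intro A hA
    have := Submodule.finrank_le A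
    simpa [Module.finrank_fintype_fun_eq_card] using this
  have hmn : m ≤ n := hBm ▸ hAn B hB
  by_cases hcase : 2 * m + d ≤ n
  · have hle : sInf {x : ℕ |
        (∀ A ∈ 𝓕, finrank K ↥A ∈ Set.Icc x (x + d)) ∨
        (∀ A ∈ 𝓕, finrank K ↥(stdPerp A) ∈ Set.Icc x (x + d))} ≤ m :=
      Nat.sInf_le (Or.inl fun A hA => Set.mem_Icc.mpr ⟨hmle A hA, hub A hA⟩)
    omega
  · have hle : sInf {x : ℕ |
        (∀ A ∈ 𝓕, finrank K ↥A ∈ Set.Icc x (x + d)) ∨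
        (∀ A ∈ 𝓕, finrank K ↥(stdPerp A) ∈ Set.Icc x (x + d))} ≤ n - (m + d) := by
      refine Nat.sInf_le (Or.inr fun A hA => Set.mem_Icc.mpr ?_)
      rw [finrank_stdPerp]
      have h1 := hmle A hA
      have h2 := hub A hA
      have h3 := hAn A hA
      omega
    omega
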